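/- Let ν be a tempered (non-negative) Borel measure on ℝ^d whose Fourier transform (as a tempered distribution) is supported in the cone {ξ ∈ ℝ^d : Σ_{j=k+1}^d ξ_j² ≥ ε Σ_{j=1}^k ξ_j²} ∪ B(0,R) for some ε > 0, R > 0, 0 ≤ k ≤ d-1, and which decays at infinity: ν(ℝ^d \ B(0,R')) ≲_N (R')^{-N} for all N ∈ ℕ and R' > 1. Then the heat extension satisfies Heat[ν](0,t) ≲ t^{(k-d)/2} for t ∈ (0,1], where Heat[ν](x,t) = (4πt)^{-d/2} ∫ exp(-|x-y|²/(4t)) dν(y). -/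

import Mathlib

open MeasureTheory Metric Set Filter Topology Real

open scoped RealInnerProductSpace

section HeatConeAux

variable {d k : ℕ}

/-- Embedding of `ℝ^k` into the first `k` coordinates of `ℝ^d`. -/
noncomputable def heatEmb (hkd : k ≤ d) (η : EuclideanSpace ℝ (Fin k)) :
    EuclideanSpace ℝ (Fin d) :=
  WithLp.toLp 2 (fun j : Fin d => if h : (j : ℕ) < k then η ⟨j, h⟩ else 0)

/-- Projection of `ℝ^d` onto the first `k` coordinates. -/
noncomputable def heatProj (hkd : k ≤ d) (y : EuclideanSpace ℝ (Fin d)) :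
    EuclideanSpace ℝ (Fin k) :=
  WithLp.toLp 2 (fun i => y (Fin.castLE hkd i))

lemma sum_ite_lt (hkd : k ≤ d) (F : Fin d → ℝ) :
    ∑ j : Fin d, (if (j : ℕ) < k then F j else 0) =
      ∑ i : Fin k, F (Fin.castLE hkd i) := by
  rw [← Finset.sum_filter]
  rw [show Finset.filter (fun j : Fin d => (j : ℕ) < k) Finset.univ
      = Finset.univ.map (Fin.castLEEmb hkd) by
    ext j
    simp only [Finset.mem_filter, Finset.mem_univ, true_and, Finset.mem_map,
      Fin.castLEEmb_apply]
    constructor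
    · intro hj; exact ⟨⟨(j : ℕ), hj⟩, by ext; simp⟩
    · rintro ⟨i, rfl⟩; simpa using i.isLt]
  rw [Finset.sum_map]
  rfl

lemma inner_heatEmb (hkd : k ≤ d) (η : EuclideanSpace ℝ (Fin k))
    (y : EuclideanSpace ℝ (Fin d)) :
    ⟪heatEmb hkd η, y⟫ = ⟪η, heatProj hkd y⟫ := by
  simp only [PiLp.inner_apply, RCLike.inner_apply, conj_trivial, starRingEnd_apply, star_trivial]
  rw [show (∑ j : Fin d, y j * heatEmb hkd η j)
      = ∑ j : Fin d, (if (j : ℕ) < k then y j * (if h : (j:ℕ) < k then η ⟨j, h⟩ else 0) else 0) by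
    apply Finset.sum_congr rfl
    intro j _
    by_cases h : (j : ℕ) < k <;> simp [heatEmb, h]]
  rw [sum_ite_lt hkd]
  apply Finset.sum_congr rfl
  intro i _
  simp [heatProj, i.2]

lemma normsq_euclidean {n : ℕ} (x : EuclideanSpace ℝ (Fin n)) :
    ‖x‖ ^ 2 = ∑ i, x i ^ 2 := by
  rw [EuclideanSpace.norm_eq, Real.sq_sqrt (Finset.sum_nonneg fun i _ => sq_nonneg _)]
  simp [sq_abs]

lemma heatEmb_sumsq (hkd : k ≤ d) (η : EuclideanSpace ℝ (Fin k)) :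
    ∑ j : Fin d, (if (j : ℕ) < k then heatEmb hkd η j ^ 2 else 0) = ‖η‖ ^ 2 := by
  rw [sum_ite_lt hkd, normsq_euclidean]
  apply Finset.sum_congr rfl
  intro i _
  congr 1
  simp [heatEmb, i.isLt]

lemma heatEmb_sumsq' (hkd : k ≤ d) (η : EuclideanSpace ℝ (Fin k)) :
    ∑ j : Fin d, (if (j : ℕ) < k then 0 else heatEmb hkd η j ^ 2) = 0 := by
  apply Finset.sum_eq_zero
  intro j _
  by_cases h : (j : ℕ) < k
  · simp [h]
  · simp [h, heatEmb]

lemma norm_heatEmb (hkd : k ≤ d) (η : EuclideanSpace ℝ (Fin k)) :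
    ‖heatEmb hkd η‖ = ‖η‖ := by
  have h1 : ‖heatEmb hkd η‖ ^ 2 = ‖η‖ ^ 2 := by
    rw [normsq_euclidean, ← heatEmb_sumsq hkd η]
    apply Finset.sum_congr rfl
    intro j _
    by_cases h : (j : ℕ) < k <;> simp [heatEmb, h]
  calc ‖heatEmb hkd η‖ = √(‖heatEmb hkd η‖ ^ 2) := (Real.sqrt_sq (norm_nonneg _)).symm
    _ = √(‖η‖ ^ 2) := by rw [h1]
    _ = ‖η‖ := Real.sqrt_sq (norm_nonneg _)

lemma norm_heatProj_le (hkd : k ≤ d) (y : EuclideanSpace ℝ (Fin d)) :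
    ‖heatProj hkd y‖ ^ 2 ≤ ‖y‖ ^ 2 := by
  rw [normsq_euclidean, normsq_euclidean]
  rw [show (∑ i : Fin k, heatProj hkd y i ^ 2)
      = ∑ j : Fin d, (if (j : ℕ) < k then y j ^ 2 else 0) by
    rw [sum_ite_lt hkd]; rfl]
  apply Finset.sum_le_sum
  intro j _
  by_cases h : (j : ℕ) < k <;> simp [h, sq_nonneg]

lemma continuous_heatProj (hkd : k ≤ d) : Continuous (heatProj hkd) := by
  apply Continuous.comp (PiLp.continuous_toLp (p := 2) (β := fun _ : Fin k => ℝ))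
  exact continuous_pi fun i =>
    (continuous_apply (Fin.castLE hkd i)).comp (PiLp.continuous_ofLp (p := 2) (β := fun _ : Fin d => ℝ))

lemma gaussian_inv {k : ℕ} {t : ℝ} (ht : 0 < t) (x : EuclideanSpace ℝ (Fin k)) :
    ((Real.exp (-‖x‖ ^ 2 / (4 * t)) : ℝ) : ℂ) =
      (((4 * π * t) ^ ((k : ℝ) / 2) : ℝ) : ℂ) *
        ∫ η : EuclideanSpace ℝ (Fin k),
          Complex.exp (((-((4 * π ^ 2 * t) * ‖η‖ ^ 2) : ℝ) : ℂ) +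
            ((-(2 * π) * ⟪x, η⟫ : ℝ) : ℂ) * Complex.I) := by
  have hπ := Real.pi_pos
  have hb : (0:ℝ) < 4 * π ^ 2 * t := by positivity
  have hb' : 0 < ((4 * π ^ 2 * t : ℝ) : ℂ).re := by rw [Complex.ofReal_re]; exact hb
  have hint : (∫ η : EuclideanSpace ℝ (Fin k),
        Complex.exp (((-((4 * π ^ 2 * t) * ‖η‖ ^ 2) : ℝ) : ℂ) +
          ((-(2 * π) * ⟪x, η⟫ : ℝ) : ℂ) * Complex.I))
      = ∫ η : EuclideanSpace ℝ (Fin k),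
        Complex.exp (-((4 * π ^ 2 * t : ℝ) : ℂ) * (‖η‖ : ℂ) ^ 2 +
          (-(2 * π) * Complex.I) * ((⟪x, η⟫ : ℝ) : ℂ)) := by
    congr 1; funext η; congr 1; push_cast; ring
  rw [hint, GaussianFourier.integral_cexp_neg_mul_sq_norm_add hb' (-(2 * π) * Complex.I) x,
    finrank_euclideanSpace_fin]
  have ht4 : (0:ℝ) < 4 * π * t := by positivity
  have hπc : (π:ℂ) ≠ 0 := by exact_mod_cast hπ.ne'
  have htc : (t:ℂ) ≠ 0 := by exact_mod_cast ht.ne'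
  have h1 : ((π : ℂ) / ((4 * π ^ 2 * t : ℝ) : ℂ)) = ((((4 * π * t)⁻¹ : ℝ)) : ℂ) := by
    push_cast
    field_simp
  have h2 : ((-(2 * π) * Complex.I) ^ 2 * (‖x‖ : ℂ) ^ 2 / (4 * ((4 * π ^ 2 * t : ℝ) : ℂ)))
      = ((-‖x‖ ^ 2 / (4 * t) : ℝ) : ℂ) := by
    have hr : (-‖x‖ ^ 2 / (4 * t) : ℝ) = (-(2 * π)) ^ 2 * -1 * ‖x‖ ^ 2 / (4 * (4 * π ^ 2 * t)) := by
      rw [div_eq_div_iff (by positivity) (by positivity)]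
      ring
    rw [mul_pow, Complex.I_sq, hr]
    push_cast
    ring
  rw [h1, h2, ← Complex.ofReal_exp]
  have h3 : ((((4 * π * t)⁻¹ : ℝ)) : ℂ) ^ ((k : ℂ) / 2)
      = (((((4 * π * t)⁻¹ : ℝ) ^ ((k : ℝ) / 2) : ℝ)) : ℂ) := by
    rw [Complex.ofReal_cpow (by positivity)]
    norm_num
  rw [h3, ← Complex.ofReal_mul, ← Complex.ofReal_mul]
  congr 1
  rw [Real.inv_rpow ht4.le, ← mul_assoc, mul_inv_cancel₀ (Real.rpow_pos_of_pos ht4 _).ne', one_mul]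


lemma ofReal_add_ofReal_mul_I_re (a b : ℝ) :
    (((a : ℝ) : ℂ) + ((b : ℝ) : ℂ) * Complex.I).re = a := by simp

end HeatConeAux

/-- Core estimate of Theorem 1.6: if a rapidly decaying measure `ν` on `ℝᵈ` has Fourier
transform supported in the cone `{Σ_{j≥k} ξ_j² ≥ ε Σ_{j<k} ξ_j²} ∪ B(0,R)`, then its heat
extension satisfies `Heat[ν](0,t) ≲ t^{(k-d)/2}` for `t ∈ (0,1]`. -/
theorem heat_extension_bound_spectral_cone
    (d k : ℕ) (hk : k + 1 ≤ d)
    (ν : Measure (EuclideanSpace ℝ (Fin d))) [IsFiniteMeasure ν]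
    (hdecay : ∀ N : ℕ, ∃ C : ℝ, 0 < C ∧ ∀ R : ℝ, 1 < R →
      ν {y | R < ‖y‖} ≤ ENNReal.ofReal (C * R ^ (-(N : ℝ))))
    (ε R : ℝ) (hε : 0 < ε) (hR : 0 < R)
    (hspec : tsupport (fun ξ : EuclideanSpace ℝ (Fin d) =>
        ∫ y, Complex.exp (-(2 * π * (inner ℝ ξ y : ℝ) : ℝ) * Complex.I) ∂ν) ⊆
      {ξ : EuclideanSpace ℝ (Fin d) |
          ε * ∑ j : Fin d, (if (j : ℕ) < k then (ξ j) ^ 2 else 0) ≤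
            ∑ j : Fin d, (if (j : ℕ) < k then 0 else (ξ j) ^ 2)} ∪
        closedBall 0 R) :
    ∃ C : ℝ, 0 < C ∧ ∀ t : ℝ, 0 < t → t ≤ 1 →
      (4 * π * t) ^ (-(d : ℝ) / 2) *
          ∫ y, Real.exp (-‖y‖ ^ 2 / (4 * t)) ∂ν ≤
        C * t ^ (((k : ℝ) - d) / 2) := by
  classical
  have hπ := Real.pi_pos
  have hkd : k ≤ d := le_trans (Nat.le_succ k) hk
  set f : EuclideanSpace ℝ (Fin d) → ℂ :=
    fun ξ => ∫ y, Complex.exp (-(2 * π * (inner ℝ ξ y : ℝ) : ℝ) * Complex.I) ∂ν with hf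
  set M : ℝ := (ν Set.univ).toReal with hM
  set Vol : ℝ := (volume (closedBall (0 : EuclideanSpace ℝ (Fin k)) R)).toReal with hVol
  have hM0 : 0 ≤ M := ENNReal.toReal_nonneg
  have hVol0 : 0 ≤ Vol := ENNReal.toReal_nonneg
  -- bound on `f`
  have hfnorm : ∀ ξ, ‖f ξ‖ ≤ M := by
    intro ξ
    refine (norm_integral_le_integral_norm _).trans (le_of_eq ?_)
    calc (∫ y, ‖Complex.exp (-(2 * π * (inner ℝ ξ y : ℝ) : ℝ) * Complex.I)‖ ∂ν)
        = ∫ _, (1 : ℝ) ∂ν := by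
          apply integral_congr_ae
          filter_upwards with y
          rw [Complex.norm_exp]
          simp
      _ = M := by simp [hM, measureReal_def]
  -- vanishing of `f` along the embedded `ℝᵏ` outside the ball
  have hvanish : ∀ η : EuclideanSpace ℝ (Fin k), R < ‖η‖ → f (heatEmb hkd η) = 0 := by
    intro η hη
    apply image_eq_zero_of_notMem_tsupport
    intro hmem
    rcases hspec hmem with hcone | hball
    · have h1 := heatEmb_sumsq hkd η
      have h2 := heatEmb_sumsq' hkd η
      have hc := hcone
      rw [Set.mem_setOf_eq, h1, h2] at hc
      have hpos : (0:ℝ) < ‖η‖ := lt_trans hR hη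
      exact absurd hc (not_le.2 (mul_pos hε (pow_pos hpos 2)))
    · rw [mem_closedBall, dist_zero_right, norm_heatEmb hkd] at hball
      linarith
  refine ⟨(4 * π) ^ (((k : ℝ) - d) / 2) * (M * Vol) + 1, by positivity, ?_⟩
  intro t ht ht1
  have hb : (0:ℝ) < 4 * π ^ 2 * t := by positivity
  have hb' : 0 < ((4 * π ^ 2 * t : ℝ) : ℂ).re := by rw [Complex.ofReal_re]; exact hb
  -- integrability of the Gaussian on ℝᵏ
  have hg' : Integrable (fun η : EuclideanSpace ℝ (Fin k) =>
      Real.exp (-((4 * π ^ 2 * t) * ‖η‖ ^ 2))) volume := by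
    have hg := (GaussianFourier.integrable_cexp_neg_mul_sq_norm_add hb' 0
      (0 : EuclideanSpace ℝ (Fin k))).norm
    apply hg.congr
    filter_upwards with η
    rw [Complex.norm_exp,
      show (-((4 * π ^ 2 * t : ℝ) : ℂ) * (‖η‖ : ℂ) ^ 2 +
          0 * ((inner ℝ (0 : EuclideanSpace ℝ (Fin k)) η : ℝ) : ℂ))
        = ((-((4 * π ^ 2 * t) * ‖η‖ ^ 2) : ℝ) : ℂ) by push_cast; ring,
      Complex.ofReal_re]
  -- joint continuity
  have hcont : Continuous (Function.uncurry
      fun (y : EuclideanSpace ℝ (Fin d)) (η : EuclideanSpace ℝ (Fin k)) =>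
        Complex.exp (((-((4 * π ^ 2 * t) * ‖η‖ ^ 2) : ℝ) : ℂ) +
          ((-(2 * π) * ⟪heatProj hkd y, η⟫ : ℝ) : ℂ) * Complex.I)) := by
    apply Complex.continuous_exp.comp
    apply Continuous.add
    · apply Complex.continuous_ofReal.comp
      have : Continuous fun p : (EuclideanSpace ℝ (Fin d)) × (EuclideanSpace ℝ (Fin k)) =>
          ‖p.2‖ ^ 2 := (continuous_norm.comp continuous_snd).pow 2
      exact (continuous_const.mul this).neg
    · apply Continuous.mul ?_ continuous_const
      apply Complex.continuous_ofReal.comp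
      have : Continuous fun p : (EuclideanSpace ℝ (Fin d)) × (EuclideanSpace ℝ (Fin k)) =>
          ⟪heatProj hkd p.1, p.2⟫ :=
        Continuous.inner ((continuous_heatProj hkd).comp continuous_fst) continuous_snd
      exact continuous_const.mul this
  -- product integrability
  have hprod : Integrable (Function.uncurry
      fun (y : EuclideanSpace ℝ (Fin d)) (η : EuclideanSpace ℝ (Fin k)) =>
        Complex.exp (((-((4 * π ^ 2 * t) * ‖η‖ ^ 2) : ℝ) : ℂ) +
          ((-(2 * π) * ⟪heatProj hkd y, η⟫ : ℝ) : ℂ) * Complex.I)) (ν.prod volume) := by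
    apply Integrable.mono'
      (g := fun p : (EuclideanSpace ℝ (Fin d)) × (EuclideanSpace ℝ (Fin k)) =>
        (1 : ℝ) * Real.exp (-((4 * π ^ 2 * t) * ‖p.2‖ ^ 2)))
    · exact (integrable_const (1 : ℝ)).mul_prod hg'
    · exact hcont.aestronglyMeasurable
    · filter_upwards with p
      simp only [Function.uncurry]
      rw [Complex.norm_exp, one_mul,
        ofReal_add_ofReal_mul_I_re (-((4 * π ^ 2 * t) * ‖p.2‖ ^ 2))
          (-(2 * π) * ⟪heatProj hkd p.1, p.2⟫)]
  -- the key identity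
  have key : ((∫ y, Real.exp (-‖heatProj hkd y‖ ^ 2 / (4 * t)) ∂ν : ℝ) : ℂ)
      = (((4 * π * t) ^ ((k : ℝ) / 2) : ℝ) : ℂ) *
        ∫ η : EuclideanSpace ℝ (Fin k),
          Complex.exp (((-((4 * π ^ 2 * t) * ‖η‖ ^ 2) : ℝ) : ℂ)) * f (heatEmb hkd η) := by
    rw [show ((∫ y, Real.exp (-‖heatProj hkd y‖ ^ 2 / (4 * t)) ∂ν : ℝ) : ℂ)
        = ∫ y, ((Real.exp (-‖heatProj hkd y‖ ^ 2 / (4 * t)) : ℝ) : ℂ) ∂ν from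
      integral_ofReal.symm]
    calc (∫ y, ((Real.exp (-‖heatProj hkd y‖ ^ 2 / (4 * t)) : ℝ) : ℂ) ∂ν)
        = ∫ y, ((((4 * π * t) ^ ((k : ℝ) / 2) : ℝ) : ℂ) *
            ∫ η : EuclideanSpace ℝ (Fin k),
              Complex.exp (((-((4 * π ^ 2 * t) * ‖η‖ ^ 2) : ℝ) : ℂ) +
                ((-(2 * π) * ⟪heatProj hkd y, η⟫ : ℝ) : ℂ) * Complex.I)) ∂ν := by
          apply integral_congr_ae
          filter_upwards with y using gaussian_inv ht (heatProj hkd y)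
      _ = (((4 * π * t) ^ ((k : ℝ) / 2) : ℝ) : ℂ) *
            ∫ y, (∫ η : EuclideanSpace ℝ (Fin k),
              Complex.exp (((-((4 * π ^ 2 * t) * ‖η‖ ^ 2) : ℝ) : ℂ) +
                ((-(2 * π) * ⟪heatProj hkd y, η⟫ : ℝ) : ℂ) * Complex.I)) ∂ν :=
          integral_const_mul _ _
      _ = (((4 * π * t) ^ ((k : ℝ) / 2) : ℝ) : ℂ) *
            ∫ η : EuclideanSpace ℝ (Fin k), ∫ y,
              Complex.exp (((-((4 * π ^ 2 * t) * ‖η‖ ^ 2) : ℝ) : ℂ) +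
                ((-(2 * π) * ⟪heatProj hkd y, η⟫ : ℝ) : ℂ) * Complex.I) ∂ν := by
          rw [integral_integral_swap hprod]
      _ = (((4 * π * t) ^ ((k : ℝ) / 2) : ℝ) : ℂ) *
            ∫ η : EuclideanSpace ℝ (Fin k),
              Complex.exp (((-((4 * π ^ 2 * t) * ‖η‖ ^ 2) : ℝ) : ℂ)) * f (heatEmb hkd η) := by
          congr 1
          apply integral_congr_ae
          filter_upwards with η
          rw [show (fun y : EuclideanSpace ℝ (Fin d) =>
              Complex.exp (((-((4 * π ^ 2 * t) * ‖η‖ ^ 2) : ℝ) : ℂ) +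
                ((-(2 * π) * ⟪heatProj hkd y, η⟫ : ℝ) : ℂ) * Complex.I))
              = fun y : EuclideanSpace ℝ (Fin d) =>
                Complex.exp (((-((4 * π ^ 2 * t) * ‖η‖ ^ 2) : ℝ) : ℂ)) *
                  Complex.exp (-(2 * π * (inner ℝ (heatEmb hkd η) y : ℝ) : ℝ) * Complex.I) by
            funext y
            rw [← Complex.exp_add]
            congr 2
            rw [show (inner ℝ (heatEmb hkd η) y : ℝ) = ⟪heatProj hkd y, η⟫ by
              rw [inner_heatEmb hkd, real_inner_comm]]
            push_cast
            ring]
          rw [integral_const_mul]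
  -- bound on the frequency-side integral
  have hGf : ∀ η : EuclideanSpace ℝ (Fin k),
      ‖Complex.exp (((-((4 * π ^ 2 * t) * ‖η‖ ^ 2) : ℝ) : ℂ)) * f (heatEmb hkd η)‖
        ≤ Set.indicator (closedBall (0 : EuclideanSpace ℝ (Fin k)) R) (fun _ => M) η := by
    intro η
    by_cases hη : η ∈ closedBall (0 : EuclideanSpace ℝ (Fin k)) R
    · rw [Set.indicator_of_mem hη, norm_mul]
      have h1 : ‖Complex.exp (((-((4 * π ^ 2 * t) * ‖η‖ ^ 2) : ℝ) : ℂ))‖ ≤ 1 := by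
        rw [Complex.norm_exp, Complex.ofReal_re]
        rw [Real.exp_le_one_iff]
        have : (0:ℝ) ≤ (4 * π ^ 2 * t) * ‖η‖ ^ 2 := by positivity
        linarith
      calc ‖Complex.exp (((-((4 * π ^ 2 * t) * ‖η‖ ^ 2) : ℝ) : ℂ))‖ * ‖f (heatEmb hkd η)‖
          ≤ 1 * M := mul_le_mul h1 (hfnorm _) (norm_nonneg _) one_pos.le
        _ = M := one_mul M
    · rw [Set.indicator_of_notMem hη]
      rw [mem_closedBall, dist_zero_right, not_le] at hη
      rw [hvanish η hη, mul_zero, norm_zero]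
  have hbound : ‖∫ η : EuclideanSpace ℝ (Fin k),
      Complex.exp (((-((4 * π ^ 2 * t) * ‖η‖ ^ 2) : ℝ) : ℂ)) * f (heatEmb hkd η)‖ ≤ M * Vol := by
    refine (norm_integral_le_integral_norm _).trans ?_
    have hind : Integrable
        (Set.indicator (closedBall (0 : EuclideanSpace ℝ (Fin k)) R) (fun _ => M)) volume := by
      apply IntegrableOn.integrable_indicator ?_ measurableSet_closedBall
      exact integrableOn_const measure_closedBall_lt_top.ne
    refine (integral_mono_of_nonneg (Eventually.of_forall fun η => norm_nonneg _) hind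
      (Eventually.of_forall hGf)).trans ?_
    rw [integral_indicator_const _ measurableSet_closedBall]
    rw [smul_eq_mul, measureReal_def, ← hVol, mul_comm]
  -- real integrability of the heat kernels against ν
  have hexple : ∀ x : ℝ, x ≤ 0 → Real.exp x ≤ 1 := by
    intro x hx
    calc Real.exp x ≤ Real.exp 0 := Real.exp_le_exp.2 hx
      _ = 1 := Real.exp_zero
  have hA : Integrable (fun y : EuclideanSpace ℝ (Fin d) =>
      Real.exp (-‖y‖ ^ 2 / (4 * t))) ν := by
    refine (integrable_const (1 : ℝ)).mono' ?_ ?_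
    · exact (Real.continuous_exp.comp
        (((continuous_norm.pow 2).neg).div_const (4 * t))).aestronglyMeasurable
    · filter_upwards with y
      rw [Real.norm_eq_abs, abs_of_nonneg (Real.exp_nonneg _)]
      apply hexple
      have h1 : (0:ℝ) ≤ ‖y‖ ^ 2 / (4 * t) := by positivity
      rw [neg_div]
      linarith
  have hB : Integrable (fun y : EuclideanSpace ℝ (Fin d) =>
      Real.exp (-‖heatProj hkd y‖ ^ 2 / (4 * t))) ν := by
    refine (integrable_const (1 : ℝ)).mono' ?_ ?_
    · exact (Real.continuous_exp.comp
        ((((continuous_norm.comp (continuous_heatProj hkd)).pow 2).neg).div_const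
          (4 * t))).aestronglyMeasurable
    · filter_upwards with y
      rw [Real.norm_eq_abs, abs_of_nonneg (Real.exp_nonneg _)]
      apply hexple
      have h1 : (0:ℝ) ≤ ‖heatProj hkd y‖ ^ 2 / (4 * t) := by positivity
      rw [neg_div]
      linarith
  have hmono : (∫ y, Real.exp (-‖y‖ ^ 2 / (4 * t)) ∂ν)
      ≤ ∫ y, Real.exp (-‖heatProj hkd y‖ ^ 2 / (4 * t)) ∂ν := by
    apply integral_mono hA hB
    intro y
    apply Real.exp_le_exp.2
    rw [neg_div, neg_div, neg_le_neg_iff]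
    have h := norm_heatProj_le hkd y
    gcongr
  -- conclusion
  have hBnonneg : 0 ≤ ∫ y, Real.exp (-‖heatProj hkd y‖ ^ 2 / (4 * t)) ∂ν :=
    integral_nonneg fun y => Real.exp_nonneg _
  have hBle : (∫ y, Real.exp (-‖heatProj hkd y‖ ^ 2 / (4 * t)) ∂ν)
      ≤ (4 * π * t) ^ ((k : ℝ) / 2) * (M * Vol) := by
    have h1 : (∫ y, Real.exp (-‖heatProj hkd y‖ ^ 2 / (4 * t)) ∂ν)
        = ‖((∫ y, Real.exp (-‖heatProj hkd y‖ ^ 2 / (4 * t)) ∂ν : ℝ) : ℂ)‖ := by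
      rw [Complex.norm_real, Real.norm_eq_abs, abs_of_nonneg hBnonneg]
    rw [h1, key, norm_mul, Complex.norm_real, Real.norm_eq_abs,
      abs_of_nonneg (Real.rpow_nonneg (by positivity) _)]
    exact mul_le_mul_of_nonneg_left hbound (Real.rpow_nonneg (by positivity) _)
  have hrp0 : (0:ℝ) ≤ (4 * π * t) ^ (-(d:ℝ)/2) := Real.rpow_nonneg (by positivity) _
  calc (4 * π * t) ^ (-(d : ℝ) / 2) * ∫ y, Real.exp (-‖y‖ ^ 2 / (4 * t)) ∂ν
      ≤ (4 * π * t) ^ (-(d : ℝ) / 2) *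
          ((4 * π * t) ^ ((k : ℝ) / 2) * (M * Vol)) :=
        mul_le_mul_of_nonneg_left (hmono.trans hBle) hrp0
    _ = (4 * π) ^ (((k : ℝ) - d) / 2) * t ^ (((k : ℝ) - d) / 2) * (M * Vol) := by
        rw [← mul_assoc, ← Real.rpow_add (by positivity),
          show -(d:ℝ)/2 + (k:ℝ)/2 = ((k:ℝ) - d)/2 by ring,
          Real.mul_rpow (by positivity) ht.le]
    _ ≤ ((4 * π) ^ (((k : ℝ) - d) / 2) * (M * Vol) + 1) * t ^ (((k : ℝ) - d) / 2) := by
        have htp : (0:ℝ) < t ^ (((k:ℝ) - d)/2) := Real.rpow_pos_of_pos ht _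
        have h4 : (0:ℝ) ≤ (4 * π) ^ (((k : ℝ) - d) / 2) := Real.rpow_nonneg (by positivity) _
        nlinarith
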